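/- Let L be an n-dimensional nilpotent Lie algebra of coclass 3 (i.e., of nilpotency class n − 3) over a field 𝔽 of characteristic different from 2. If either (i) n ≤ 4, or (ii) n = 5 and dim Z(L) ≠ 1, then for any two commuting automorphisms α and β of L, the composite β ∘ α is a commuting automorphism; hence 𝒜(L) forms a subgroup of Aut(L). -/

import Mathlib

open Module

section auxCommuting

variable {F L : Type*} [Field F] [LieRing L] [LieAlgebra F L]

private lemma auxc_add (α : L ≃ₗ⁅F⁆ L) (x y : L) : α (x + y) = α x + α y := by
  rw [← LieEquiv.coe_toLinearEquiv]; exact map_add _ x y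

private lemma auxc_smul (α : L ≃ₗ⁅F⁆ L) (c : F) (x : L) : α (c • x) = c • α x := by
  rw [← LieEquiv.coe_toLinearEquiv]; exact map_smul _ c x

private lemma auxc_polar (α : L ≃ₗ⁅F⁆ L) (hα : ∀ x : L, ⁅α x, x⁆ = 0) (x y : L) :
    ⁅α x, y⁆ = -⁅α y, x⁆ := by
  have h := hα (x + y)
  rw [auxc_add, add_lie, lie_add, lie_add, hα x, hα y, zero_add, add_zero] at h
  exact eq_neg_of_add_eq_zero_left h

private lemma auxc_symm (α : L ≃ₗ⁅F⁆ L) (hα : ∀ x : L, ⁅α x, x⁆ = 0) (x y : L) :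
    ⁅α x - x, y⁆ = ⁅x, α y - y⁆ := by
  rw [sub_lie, lie_sub, auxc_polar α hα x y, ← lie_skew x (α y)]

private lemma auxc_lift {k : ℕ} [FiniteDimensional F L] (p : Submodule F L)
    (h : finrank F (L ⧸ p) = k) :
    ∃ e : Fin k → L,
      (∀ x : L, ∃ c : Fin k → F, x - ∑ i, c i • e i ∈ p) ∧
      (∀ c : Fin k → F, (∑ i, c i • e i) ∈ p → ∀ i, c i = 0) := by
  let b := Module.finBasisOfFinrankEq F (L ⧸ p) h
  have hsur : Function.Surjective p.mkQ := Submodule.Quotient.mk_surjective p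
  choose e he using fun i => hsur (b i)
  have hmem : ∀ z : L, p.mkQ z = 0 ↔ z ∈ p := by
    intro z
    rw [Submodule.mkQ_apply, Submodule.Quotient.mk_eq_zero]
  refine ⟨e, ?_, ?_⟩
  · intro x
    refine ⟨fun i => b.repr (p.mkQ x) i, (hmem _).mp ?_⟩
    rw [map_sub, map_sum]
    simp only [map_smul, he]
    rw [b.sum_repr, sub_self]
  · intro c hc
    have h0 : (∑ i, c i • b i : L ⧸ p) = 0 := by
      have h1 : p.mkQ (∑ i, c i • e i) = 0 := (hmem _).mpr hc
      rw [map_sum] at h1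
      simpa only [map_smul, he] using h1
    exact fun i => Fintype.linearIndependent_iff.mp b.linearIndependent c h0 i

/-- Normalisation: from a spanning/independent triple mod `p` and a linear relation among
the three pairwise brackets whose first coefficient is nonzero, produce a new triple with
first two elements bracketing to zero. -/
private lemma auxc_norm (p : Submodule F L) (e1 e2 e3 : L)
    (hsp : ∀ x : L, ∃ c1 c2 c3 : F, x - (c1 • e1 + c2 • e2 + c3 • e3) ∈ p)
    (hin : ∀ c1 c2 c3 : F, c1 • e1 + c2 • e2 + c3 • e3 ∈ p → c1 = 0 ∧ c2 = 0 ∧ c3 = 0)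
    (s t r : F) (hs : s ≠ 0)
    (hrel : s • ⁅e1, e2⁆ + t • ⁅e1, e3⁆ + r • ⁅e2, e3⁆ = 0) :
    ∃ E1 E2 E3 : L,
      (∀ x : L, ∃ c1 c2 c3 : F, x - (c1 • E1 + c2 • E2 + c3 • E3) ∈ p) ∧
      (∀ c1 c2 c3 : F, c1 • E1 + c2 • E2 + c3 • E3 ∈ p → c1 = 0 ∧ c2 = 0 ∧ c3 = 0) ∧
      ⁅E1, E2⁆ = 0 := by
  refine ⟨s • e1 - r • e3, s • e2 + t • e3, e3, ?_, ?_, ?_⟩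
  · intro x
    obtain ⟨c1, c2, c3, hc⟩ := hsp x
    refine ⟨s⁻¹ * c1, s⁻¹ * c2, c3 + s⁻¹ * c1 * r - s⁻¹ * c2 * t, ?_⟩
    have key : (s⁻¹ * c1) • (s • e1 - r • e3) + (s⁻¹ * c2) • (s • e2 + t • e3)
        + (c3 + s⁻¹ * c1 * r - s⁻¹ * c2 * t) • e3 = c1 • e1 + c2 • e2 + c3 • e3 := by
      match_scalars <;> field_simp <;> ring
    rw [key]
    exact hc
  · intro c1 c2 c3 hc
    have key : c1 • (s • e1 - r • e3) + c2 • (s • e2 + t • e3) + c3 • e3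
        = (c1 * s) • e1 + (c2 * s) • e2 + (c3 + c2 * t - c1 * r) • e3 := by
      match_scalars <;> ring
    rw [key] at hc
    obtain ⟨h1, h2, h3⟩ := hin _ _ _ hc
    have hc1 : c1 = 0 := by
      rcases mul_eq_zero.mp h1 with h | h
      · exact h
      · exact absurd h hs
    have hc2 : c2 = 0 := by
      rcases mul_eq_zero.mp h2 with h | h
      · exact h
      · exact absurd h hs
    refine ⟨hc1, hc2, ?_⟩
    rw [hc1, hc2] at h3
    simpa using h3
  · have key : ⁅s • e1 - r • e3, s • e2 + t • e3⁆
        = s • (s • ⁅e1, e2⁆ + t • ⁅e1, e3⁆ + r • ⁅e2, e3⁆) := by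
      rw [lie_add, sub_lie, sub_lie, smul_lie, smul_lie, smul_lie, smul_lie, lie_smul, lie_smul,
        lie_smul, lie_smul, lie_self, ← lie_skew e2 e3]
      module
    rw [key, hrel, smul_zero]

/-- The coclass-two (5-dimensional, centre of codimension 2) case: every commuting
automorphism differs from the identity by a "scalar modulo centre" map. -/
private lemma auxc_case2 (p : Submodule F L) (hZ : ∀ z ∈ p, ∀ y : L, ⁅z, y⁆ = 0)
    (α : L ≃ₗ⁅F⁆ L) (hα : ∀ x : L, ⁅α x, x⁆ = 0) (e1 e2 : L)
    (hsp : ∀ x : L, ∃ c1 c2 : F, x - (c1 • e1 + c2 • e2) ∈ p) :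
    ∃ a : F, ∀ x y : L, ⁅α x - x, y⁆ = a • ⁅x, y⁆ := by
  have hδc := auxc_symm α hα
  have hδz : ∀ z ∈ p, ∀ y : L, ⁅α z - z, y⁆ = 0 := by
    intro z hz y
    rw [hδc]
    exact hZ z hz _
  have hdec : ∀ (w y : L) (c1 c2 : F), w - (c1 • e1 + c2 • e2) ∈ p →
      ⁅w, y⁆ = c1 • ⁅e1, y⁆ + c2 • ⁅e2, y⁆ := by
    intro w y c1 c2 hw
    have h0 := hZ _ hw y
    rw [sub_lie, add_lie, smul_lie, smul_lie, sub_eq_zero] at h0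
    exact h0
  have hdecr : ∀ (w y : L) (c1 c2 : F), w - (c1 • e1 + c2 • e2) ∈ p →
      ⁅y, w⁆ = c1 • ⁅y, e1⁆ + c2 • ⁅y, e2⁆ := by
    intro w y c1 c2 hw
    rw [← lie_skew y w, hdec w y c1 c2 hw, ← lie_skew y e1, ← lie_skew y e2]
    module
  obtain ⟨p0, p1, hp⟩ := hsp (α e1 - e1)
  obtain ⟨q0, q1, hq⟩ := hsp (α e2 - e2)
  have eq1 : p1 • ⁅e1, e2⁆ = 0 := by
    have h0 : ⁅α e1 - e1, e1⁆ = 0 := by rw [sub_lie, hα, lie_self, sub_zero]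
    rw [hdec _ _ _ _ hp, lie_self, smul_zero, zero_add, ← lie_skew e2 e1, smul_neg,
      neg_eq_zero] at h0
    exact h0
  have eq2 : q0 • ⁅e1, e2⁆ = 0 := by
    have h0 : ⁅α e2 - e2, e2⁆ = 0 := by rw [sub_lie, hα, lie_self, sub_zero]
    rw [hdec _ _ _ _ hq, lie_self, smul_zero, add_zero] at h0
    exact h0
  have eq3 : p0 • ⁅e1, e2⁆ = q1 • ⁅e1, e2⁆ := by
    have hL : ⁅α e1 - e1, e2⁆ = p0 • ⁅e1, e2⁆ := by
      rw [hdec _ _ _ _ hp, lie_self, smul_zero, add_zero]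
    have hR : ⁅e1, α e2 - e2⁆ = q1 • ⁅e1, e2⁆ := by
      rw [hdecr _ _ _ _ hq, lie_self, smul_zero, zero_add]
    rw [← hL, ← hR]
    exact hδc e1 e2
  have claim1 : ∀ y : L, ⁅α e1 - e1, y⁆ = p0 • ⁅e1, y⁆ := by
    intro y
    obtain ⟨y1, y2, hy⟩ := hsp y
    have h2y : ⁅e2, y⁆ = -(y1 • ⁅e1, e2⁆) := by
      rw [hdecr _ _ _ _ hy, lie_self, smul_zero, add_zero, ← lie_skew e2 e1, smul_neg]
    rw [hdec _ _ _ _ hp, h2y, smul_neg, smul_comm p1 y1, eq1, smul_zero, neg_zero, add_zero]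
  have claim2 : ∀ y : L, ⁅α e2 - e2, y⁆ = p0 • ⁅e2, y⁆ := by
    intro y
    obtain ⟨y1, y2, hy⟩ := hsp y
    have h1y : ⁅e1, y⁆ = y2 • ⁅e1, e2⁆ := by
      rw [hdecr _ _ _ _ hy, lie_self, smul_zero, zero_add]
    have h2y : ⁅e2, y⁆ = -(y1 • ⁅e1, e2⁆) := by
      rw [hdecr _ _ _ _ hy, lie_self, smul_zero, add_zero, ← lie_skew e2 e1, smul_neg]
    rw [hdec _ _ _ _ hq, h1y, h2y, smul_comm q0 y2, eq2, smul_zero, zero_add, smul_neg,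
      smul_neg, smul_comm q1 y1, smul_comm p0 y1, ← eq3]
  refine ⟨p0, ?_⟩
  intro x y
  obtain ⟨x1, x2, hx⟩ := hsp x
  obtain ⟨zx, hzxm, hzx⟩ : ∃ z, z ∈ p ∧ x = x1 • e1 + x2 • e2 + z := ⟨_, hx, by module⟩
  have hax : α x - x = x1 • (α e1 - e1) + x2 • (α e2 - e2) + (α zx - zx) := by
    have h1 : α x = x1 • α e1 + x2 • α e2 + α zx := by
      conv_lhs => rw [hzx]
      rw [auxc_add, auxc_add, auxc_smul, auxc_smul]
    rw [h1]
    conv_lhs => rw [hzx]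
    module
  have hxy : ⁅x, y⁆ = x1 • ⁅e1, y⁆ + x2 • ⁅e2, y⁆ := by
    conv_lhs => rw [hzx]
    rw [add_lie, add_lie, smul_lie, smul_lie, hZ zx hzxm, add_zero]
  rw [hax, add_lie, add_lie, smul_lie, smul_lie, claim1, claim2, hδz zx hzxm, hxy]
  module

/-- The coclass-three (5-dimensional, centre of codimension 3) case. -/
private lemma auxc_case3 (p : Submodule F L) (hZ : ∀ z ∈ p, ∀ y : L, ⁅z, y⁆ = 0)
    (hZmem : ∀ w : L, (∀ y : L, ⁅w, y⁆ = 0) → w ∈ p)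
    (α : L ≃ₗ⁅F⁆ L) (hα : ∀ x : L, ⁅α x, x⁆ = 0) (E1 E2 E3 : L)
    (hsp : ∀ x : L, ∃ c1 c2 c3 : F, x - (c1 • E1 + c2 • E2 + c3 • E3) ∈ p)
    (hin : ∀ c1 c2 c3 : F, c1 • E1 + c2 • E2 + c3 • E3 ∈ p → c1 = 0 ∧ c2 = 0 ∧ c3 = 0)
    (he12 : ⁅E1, E2⁆ = 0) :
    ∃ a : F, ∀ x y : L, ⁅α x - x, y⁆ = a • ⁅x, y⁆ := by
  have hδc := auxc_symm α hα
  have hδz : ∀ z ∈ p, ∀ y : L, ⁅α z - z, y⁆ = 0 := by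
    intro z hz y
    rw [hδc]
    exact hZ z hz _
  have he21 : ⁅E2, E1⁆ = 0 := by rw [← lie_skew E2 E1, he12, neg_zero]
  have hdec : ∀ (w y : L) (c1 c2 c3 : F), w - (c1 • E1 + c2 • E2 + c3 • E3) ∈ p →
      ⁅w, y⁆ = c1 • ⁅E1, y⁆ + c2 • ⁅E2, y⁆ + c3 • ⁅E3, y⁆ := by
    intro w y c1 c2 c3 hw
    have h0 := hZ _ hw y
    rw [sub_lie, add_lie, add_lie, smul_lie, smul_lie, smul_lie, sub_eq_zero] at h0
    exact h0
  have hdecr : ∀ (w y : L) (c1 c2 c3 : F), w - (c1 • E1 + c2 • E2 + c3 • E3) ∈ p →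
      ⁅y, w⁆ = c1 • ⁅y, E1⁆ + c2 • ⁅y, E2⁆ + c3 • ⁅y, E3⁆ := by
    intro w y c1 c2 c3 hw
    rw [← lie_skew y w, hdec w y c1 c2 c3 hw, ← lie_skew y E1, ← lie_skew y E2, ← lie_skew y E3]
    module
  have huw : ∀ a b : F, a • ⁅E1, E3⁆ + b • ⁅E2, E3⁆ = 0 → a = 0 ∧ b = 0 := by
    intro a b hab
    have hmem : a • E1 + b • E2 + (0 : F) • E3 ∈ p := by
      rw [zero_smul, add_zero]
      apply hZmem
      intro y
      obtain ⟨y1, y2, y3, hy⟩ := hsp y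
      have h1 : ⁅E1, y⁆ = y3 • ⁅E1, E3⁆ := by
        rw [hdecr _ _ _ _ _ hy, lie_self, smul_zero, he12, smul_zero, add_zero, zero_add]
      have h2 : ⁅E2, y⁆ = y3 • ⁅E2, E3⁆ := by
        rw [hdecr _ _ _ _ _ hy, lie_self, smul_zero, he21, smul_zero, add_zero, zero_add]
      rw [add_lie, smul_lie, smul_lie, h1, h2, smul_comm a y3, smul_comm b y3, ← smul_add,
        hab, smul_zero]
    obtain ⟨h1, h2, -⟩ := hin _ _ _ hmem
    exact ⟨h1, h2⟩
  obtain ⟨p0, p1, p2, hp⟩ := hsp (α E1 - E1)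
  obtain ⟨q0, q1, q2, hq⟩ := hsp (α E2 - E2)
  obtain ⟨r0, r1, r2, hr⟩ := hsp (α E3 - E3)
  have eqp2 : p2 = 0 := by
    have h0 : ⁅α E1 - E1, E1⁆ = 0 := by rw [sub_lie, hα, lie_self, sub_zero]
    rw [hdec _ _ _ _ _ hp, lie_self, smul_zero, he21, smul_zero, add_zero, zero_add,
      ← lie_skew E3 E1, smul_neg, neg_eq_zero] at h0
    exact (huw p2 0 (by rw [zero_smul, add_zero]; exact h0)).1
  have eqq2 : q2 = 0 := by
    have h0 : ⁅α E2 - E2, E2⁆ = 0 := by rw [sub_lie, hα, lie_self, sub_zero]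
    rw [hdec _ _ _ _ _ hq, lie_self, smul_zero, he12, smul_zero, add_zero, zero_add,
      ← lie_skew E3 E2, smul_neg, neg_eq_zero] at h0
    exact (huw 0 q2 (by rw [zero_smul, zero_add]; exact h0)).2
  have eqr : r0 = 0 ∧ r1 = 0 := by
    have h0 : ⁅α E3 - E3, E3⁆ = 0 := by rw [sub_lie, hα, lie_self, sub_zero]
    rw [hdec _ _ _ _ _ hr, lie_self, smul_zero, add_zero] at h0
    exact huw r0 r1 h0
  have eq13 : p0 = r2 ∧ p1 = 0 := by
    have hL : ⁅α E1 - E1, E3⁆ = p0 • ⁅E1, E3⁆ + p1 • ⁅E2, E3⁆ := by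
      rw [hdec _ _ _ _ _ hp, lie_self, smul_zero, add_zero]
    have hR : ⁅E1, α E3 - E3⁆ = r2 • ⁅E1, E3⁆ := by
      rw [hdecr _ _ _ _ _ hr, lie_self, smul_zero, he12, smul_zero, zero_add, zero_add]
    have hcomb : p0 • ⁅E1, E3⁆ + p1 • ⁅E2, E3⁆ = r2 • ⁅E1, E3⁆ := by
      rw [← hL, ← hR]
      exact hδc E1 E3
    have h0 : (p0 - r2) • ⁅E1, E3⁆ + p1 • ⁅E2, E3⁆ = 0 :=
      calc (p0 - r2) • ⁅E1, E3⁆ + p1 • ⁅E2, E3⁆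
          = (p0 • ⁅E1, E3⁆ + p1 • ⁅E2, E3⁆) - r2 • ⁅E1, E3⁆ := by module
        _ = 0 := sub_eq_zero.mpr hcomb
    obtain ⟨h1, h2⟩ := huw _ _ h0
    exact ⟨sub_eq_zero.mp h1, h2⟩
  have eq23 : q0 = 0 ∧ q1 = r2 := by
    have hL : ⁅α E2 - E2, E3⁆ = q0 • ⁅E1, E3⁆ + q1 • ⁅E2, E3⁆ := by
      rw [hdec _ _ _ _ _ hq, lie_self, smul_zero, add_zero]
    have hR : ⁅E2, α E3 - E3⁆ = r2 • ⁅E2, E3⁆ := by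
      rw [hdecr _ _ _ _ _ hr, lie_self, smul_zero, he21, smul_zero, zero_add, zero_add]
    have hcomb : q0 • ⁅E1, E3⁆ + q1 • ⁅E2, E3⁆ = r2 • ⁅E2, E3⁆ := by
      rw [← hL, ← hR]
      exact hδc E2 E3
    have h0 : q0 • ⁅E1, E3⁆ + (q1 - r2) • ⁅E2, E3⁆ = 0 :=
      calc q0 • ⁅E1, E3⁆ + (q1 - r2) • ⁅E2, E3⁆
          = (q0 • ⁅E1, E3⁆ + q1 • ⁅E2, E3⁆) - r2 • ⁅E2, E3⁆ := by module
        _ = 0 := sub_eq_zero.mpr hcomb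
    obtain ⟨h1, h2⟩ := huw _ _ h0
    exact ⟨h1, sub_eq_zero.mp h2⟩
  have claim1 : ∀ y : L, ⁅α E1 - E1, y⁆ = r2 • ⁅E1, y⁆ := by
    intro y
    rw [hdec _ _ _ _ _ hp, eq13.2, eqp2, zero_smul, zero_smul, add_zero, add_zero, eq13.1]
  have claim2 : ∀ y : L, ⁅α E2 - E2, y⁆ = r2 • ⁅E2, y⁆ := by
    intro y
    rw [hdec _ _ _ _ _ hq, eq23.1, eqq2, zero_smul, zero_smul, add_zero, zero_add, eq23.2]
  have claim3 : ∀ y : L, ⁅α E3 - E3, y⁆ = r2 • ⁅E3, y⁆ := by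
    intro y
    rw [hdec _ _ _ _ _ hr, eqr.1, eqr.2, zero_smul, zero_smul, zero_add, zero_add]
  refine ⟨r2, ?_⟩
  intro x y
  obtain ⟨x1, x2, x3, hx⟩ := hsp x
  obtain ⟨zx, hzxm, hzx⟩ : ∃ z, z ∈ p ∧ x = x1 • E1 + x2 • E2 + x3 • E3 + z := ⟨_, hx, by module⟩
  have hax : α x - x = x1 • (α E1 - E1) + x2 • (α E2 - E2) + x3 • (α E3 - E3) + (α zx - zx) := by
    have h1 : α x = x1 • α E1 + x2 • α E2 + x3 • α E3 + α zx := by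
      conv_lhs => rw [hzx]
      rw [auxc_add, auxc_add, auxc_add, auxc_smul, auxc_smul, auxc_smul]
    rw [h1]
    conv_lhs => rw [hzx]
    module
  have hxy : ⁅x, y⁆ = x1 • ⁅E1, y⁆ + x2 • ⁅E2, y⁆ + x3 • ⁅E3, y⁆ := by
    conv_lhs => rw [hzx]
    rw [add_lie, add_lie, add_lie, smul_lie, smul_lie, smul_lie, hZ zx hzxm, add_zero]
  rw [hax, add_lie, add_lie, add_lie, smul_lie, smul_lie, smul_lie, claim1, claim2, claim3,
    hδz zx hzxm, hxy]
  module

private lemma auxc_key [FiniteDimensional F L]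
    (hn : finrank F L = 5)
    (h2 : ∀ x y z : L, ⁅x, ⁅y, z⁆⁆ = 0)
    (hzc : finrank F ↥(LieAlgebra.center F L) ≠ 1)
    (α : L ≃ₗ⁅F⁆ L) (hα : ∀ x : L, ⁅α x, x⁆ = 0) :
    ∃ a : F, ∀ x y : L, ⁅α x - x, y⁆ = a • ⁅x, y⁆ := by
  by_cases hab : ∀ x y : L, ⁅x, y⁆ = 0
  · exact ⟨0, fun x y => by rw [sub_lie, hab, hab, sub_zero, zero_smul]⟩
  set Z : Submodule F L := (LieAlgebra.center F L).toSubmodule with hZdef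
  have hZmem : ∀ w : L, (∀ y : L, ⁅w, y⁆ = 0) → w ∈ Z := by
    intro w hw
    show w ∈ LieAlgebra.center F L
    rw [LieModule.mem_maxTrivSubmodule]
    intro y
    rw [← lie_skew y w, hw y, neg_zero]
  have hZ : ∀ z ∈ Z, ∀ y : L, ⁅z, y⁆ = 0 := by
    intro z hz y
    have hz' : z ∈ LieAlgebra.center F L := hz
    rw [LieModule.mem_maxTrivSubmodule] at hz'
    rw [← lie_skew z y, hz' y, neg_zero]
  have hbr : ∀ x y : L, ⁅x, y⁆ ∈ Z := by
    intro x y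
    apply hZmem
    intro w
    rw [← lie_skew ⁅x, y⁆ w, h2 w x y, neg_zero]
  have hq5 : finrank F (L ⧸ Z) + finrank F Z = 5 := by
    rw [Submodule.finrank_quotient_add_finrank, hn]
  have hz1 : 1 ≤ finrank F Z := by
    push_neg at hab
    obtain ⟨x0, y0, hxy⟩ := hab
    have : Nontrivial ↥Z := by
      refine ⟨⟨⁅x0, y0⁆, hbr x0 y0⟩, 0, ?_⟩
      simp only [ne_eq, Submodule.mk_eq_zero]
      exact hxy
    have := Module.finrank_pos_iff (R := F) (M := ↥Z) |>.mpr this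
    omega
  have hzne1 : finrank F Z ≠ 1 := hzc
  have hv2 : 2 ≤ finrank F (L ⧸ Z) := by
    by_contra hcon
    push_neg at hcon
    obtain ⟨v0, hv0⟩ := (finrank_le_one_iff (K := F) (V := L ⧸ Z)).mp (by omega)
    obtain ⟨e0, he0⟩ := Submodule.Quotient.mk_surjective Z v0
    have hsplit : ∀ w : L, ∃ c : F, w - c • e0 ∈ Z := by
      intro w
      obtain ⟨c, hc⟩ := hv0 (Z.mkQ w)
      refine ⟨c, ?_⟩
      rw [← Submodule.Quotient.mk_eq_zero, ← Submodule.mkQ_apply, map_sub, map_smul,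
        Submodule.mkQ_apply, Submodule.mkQ_apply, he0, hc, ← Submodule.mkQ_apply, sub_self]
    apply hab
    intro x y
    obtain ⟨cx, hcx⟩ := hsplit x
    obtain ⟨cy, hcy⟩ := hsplit y
    have h1 : ⁅x, y⁆ = cx • ⁅e0, y⁆ := by
      have h0 := hZ _ hcx y
      rw [sub_lie, smul_lie, sub_eq_zero] at h0
      exact h0
    have h3 : ⁅y, e0⁆ = cy • ⁅e0, e0⁆ := by
      have h0 := hZ _ hcy e0
      rw [sub_lie, smul_lie, sub_eq_zero] at h0
      exact h0
    rw [h1, ← lie_skew e0 y, h3, lie_self, smul_zero, neg_zero, smul_zero]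
  have hvz : finrank F (L ⧸ Z) = 2 ∨ finrank F (L ⧸ Z) = 3 := by omega
  rcases hvz with hv | hv
  · obtain ⟨e, hspF, -⟩ := auxc_lift Z hv
    apply auxc_case2 Z hZ α hα (e 0) (e 1)
    intro x
    obtain ⟨c, hc⟩ := hspF x
    exact ⟨c 0, c 1, by simpa [Fin.sum_univ_two] using hc⟩
  · obtain ⟨f, hspF, hinF⟩ := auxc_lift Z hv
    have hsp : ∀ x : L, ∃ c1 c2 c3 : F, x - (c1 • f 0 + c2 • f 1 + c3 • f 2) ∈ Z := by
      intro x
      obtain ⟨c, hc⟩ := hspF x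
      exact ⟨c 0, c 1, c 2, by simpa [Fin.sum_univ_three] using hc⟩
    have hin : ∀ c1 c2 c3 : F, c1 • f 0 + c2 • f 1 + c3 • f 2 ∈ Z →
        c1 = 0 ∧ c2 = 0 ∧ c3 = 0 := by
      intro c1 c2 c3 h
      have := hinF ![c1, c2, c3] (by simpa [Fin.sum_univ_three] using h)
      exact ⟨by simpa using this 0, by simpa using this 1, by simpa using this 2⟩
    have hzr : finrank F Z = 2 := by omega
    have hdep : ¬ LinearIndependent F
        ![(⟨⁅f 0, f 1⁆, hbr _ _⟩ : Z), ⟨⁅f 0, f 2⁆, hbr _ _⟩, ⟨⁅f 1, f 2⁆, hbr _ _⟩] := by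
      intro hli
      have := hli.fintype_card_le_finrank
      rw [hzr] at this
      simp at this
    obtain ⟨g, hg0, i, hgi⟩ := Fintype.not_linearIndependent_iff.mp hdep
    have hrelL : g 0 • ⁅f 0, f 1⁆ + g 1 • ⁅f 0, f 2⁆ + g 2 • ⁅f 1, f 2⁆ = 0 := by
      have := congrArg (Z.subtype) hg0
      simpa [Fin.sum_univ_three] using this
    have hnorm : ∃ E1 E2 E3 : L,
        (∀ x : L, ∃ c1 c2 c3 : F, x - (c1 • E1 + c2 • E2 + c3 • E3) ∈ Z) ∧
        (∀ c1 c2 c3 : F, c1 • E1 + c2 • E2 + c3 • E3 ∈ Z → c1 = 0 ∧ c2 = 0 ∧ c3 = 0) ∧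
        ⁅E1, E2⁆ = 0 := by
      fin_cases i
      · exact auxc_norm Z (f 0) (f 1) (f 2) hsp hin _ _ _ hgi hrelL
      · refine auxc_norm Z (f 0) (f 2) (f 1) ?_ ?_ (g 1) (g 0) (-(g 2)) hgi ?_
        · intro x
          obtain ⟨c1, c2, c3, hc⟩ := hsp x
          refine ⟨c1, c3, c2, ?_⟩
          rw [show c1 • f 0 + c3 • f 2 + c2 • f 1 = c1 • f 0 + c2 • f 1 + c3 • f 2 by module]
          exact hc
        · intro c1 c2 c3 h
          have := hin c1 c3 c2 (by
            rw [show c1 • f 0 + c3 • f 1 + c2 • f 2 = c1 • f 0 + c2 • f 2 + c3 • f 1 by module]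
            exact h)
          exact ⟨this.1, this.2.2, this.2.1⟩
        · rw [show g 1 • ⁅f 0, f 2⁆ + g 0 • ⁅f 0, f 1⁆ + (-(g 2)) • ⁅f 2, f 1⁆
              = g 0 • ⁅f 0, f 1⁆ + g 1 • ⁅f 0, f 2⁆ + g 2 • ⁅f 1, f 2⁆ by
            rw [← lie_skew (f 2) (f 1)]; module]
          exact hrelL
      · refine auxc_norm Z (f 1) (f 2) (f 0) ?_ ?_ (g 2) (-(g 0)) (-(g 1)) hgi ?_
        · intro x
          obtain ⟨c1, c2, c3, hc⟩ := hsp x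
          refine ⟨c2, c3, c1, ?_⟩
          rw [show c2 • f 1 + c3 • f 2 + c1 • f 0 = c1 • f 0 + c2 • f 1 + c3 • f 2 by module]
          exact hc
        · intro c1 c2 c3 h
          have := hin c3 c1 c2 (by
            rw [show c3 • f 0 + c1 • f 1 + c2 • f 2 = c1 • f 1 + c2 • f 2 + c3 • f 0 by module]
            exact h)
          exact ⟨this.2.1, this.2.2, this.1⟩
        · rw [show g 2 • ⁅f 1, f 2⁆ + (-(g 0)) • ⁅f 1, f 0⁆ + (-(g 1)) • ⁅f 2, f 0⁆
              = g 0 • ⁅f 0, f 1⁆ + g 1 • ⁅f 0, f 2⁆ + g 2 • ⁅f 1, f 2⁆ by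
            rw [← lie_skew (f 1) (f 0), ← lie_skew (f 2) (f 0)]; module]
          exact hrelL
    obtain ⟨E1, E2, E3, hs3, hi3, he12⟩ := hnorm
    exact auxc_case3 Z hZ hZmem α hα E1 E2 E3 hs3 hi3 he12

end auxCommuting

/-- Let `L` be an `n`-dimensional nilpotent Lie algebra of coclass `3` (i.e. of nilpotency class
`n − 3`) over a field `𝔽` of characteristic different from `2`. If either `n ≤ 4`, or `n = 5` and
`dim Z(L) ≠ 1`, then the composite of any two commuting automorphisms of `L` is again a commuting
automorphism; hence `𝒜(L)` forms a subgroup of `Aut(L)`. -/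
theorem comp_commuting_of_coclass_three_small_dim {F L : Type*} [Field F] [LieRing L]
    [LieAlgebra F L] [FiniteDimensional F L] (hchar : ringChar F ≠ 2)
    (n : ℕ) (hn : Module.finrank F L = n)
    (hclass : LieModule.lowerCentralSeries F L L (n - 3) = ⊥)
    (hclass' : LieModule.lowerCentralSeries F L L (n - 4) ≠ ⊥)
    (hsmall : n ≤ 4 ∨ (n = 5 ∧ Module.finrank F ↥(LieAlgebra.center F L) ≠ 1))
    (α β : L ≃ₗ⁅F⁆ L) (hα : ∀ x : L, ⁅α x, x⁆ = 0) (hβ : ∀ x : L, ⁅β x, x⁆ = 0) :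
    ∀ x : L, ⁅β (α x), x⁆ = 0 := by
  intro x
  obtain ⟨a, ha⟩ : ∃ a : F, ∀ u v : L, ⁅α u - u, v⁆ = a • ⁅u, v⁆ := by
    rcases hsmall with h4 | ⟨h5, hz⟩
    · have hab : ∀ u v : L, ⁅u, v⁆ = 0 := by
        rcases Nat.lt_or_ge n 4 with hlt | hge
        · have h0 : n - 3 = 0 := by omega
          rw [h0, LieModule.lowerCentralSeries_zero] at hclass
          intro u v
          have hu : u ∈ (⊥ : LieSubmodule F L L) := hclass ▸ LieSubmodule.mem_top u
          rw [LieSubmodule.mem_bot] at hu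
          rw [hu, zero_lie]
        · have h1 : n - 3 = 1 := by omega
          rw [h1] at hclass
          intro u v
          have hm : ⁅u, v⁆ ∈ (⊥ : LieSubmodule F L L) := by
            rw [← hclass, show (1 : ℕ) = 0 + 1 from rfl, LieModule.lowerCentralSeries_succ,
              LieModule.lowerCentralSeries_zero]
            exact LieSubmodule.lie_mem_lie (LieSubmodule.mem_top u) (LieSubmodule.mem_top v)
          rwa [LieSubmodule.mem_bot] at hm
      exact ⟨0, fun u v => by rw [sub_lie, hab, hab, sub_zero, zero_smul]⟩
    · subst h5
      norm_num at hclass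
      have h2 : ∀ u v w : L, ⁅u, ⁅v, w⁆⁆ = 0 := by
        intro u v w
        have hm : ⁅u, ⁅v, w⁆⁆ ∈ (⊥ : LieSubmodule F L L) := by
          rw [← hclass]
          exact LieSubmodule.lie_mem_lie (LieSubmodule.mem_top u)
            (LieSubmodule.lie_mem_lie (LieSubmodule.mem_top v) (LieSubmodule.mem_top w))
        rwa [LieSubmodule.mem_bot] at hm
      exact auxc_key hn h2 hz α hα
  have h1 : β (α x) = β (α x - x) + β x := by rw [← auxc_add β, sub_add_cancel]
  rw [h1, add_lie, hβ, add_zero]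
  rw [auxc_polar β hβ (α x - x) x, lie_skew (α x - x) (β x), ha, ← lie_skew x (β x), hβ,
    neg_zero, smul_zero]
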